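/- If a continuous surjection π : X → Y between compact metric spaces semiconjugates homeomorphisms f : X → X and g : Y → Y (i.e. π ∘ f = g ∘ π), and every fiber π⁻¹(y) is finite or, more generally, h_top(f, π⁻¹(y)) = 0 uniformly, with the fibers of uniformly bounded diameter under iteration in the sense of Bowen, then h_top(f) = h_top(g). In particular, for a fiber-preserving homeomorphism of a circle bundle covering a base homeomorphism, the topological entropies of the total map and the base map coincide. -/

import Mathlib

open Dynamics Set Filter Uniformity UniformSpace
open scoped SetRel

namespace BowenAux

variable {X Y : Type*}

/-- Block times for the Bowen coding argument: starting from time `0`, each block starting at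
time `t` on the `g`-orbit of `z` has length `n (σ (g^[t] z))`. -/
def tau (g : Y → Y) (n : Y → ℕ) (σ : Y → Y) (z : Y) : ℕ → ℕ
  | 0 => 0
  | l + 1 => tau g n σ z l + n (σ (g^[tau g n σ z l] z))

lemma tau_zero (g : Y → Y) (n : Y → ℕ) (σ : Y → Y) (z : Y) : tau g n σ z 0 = 0 := rfl

lemma tau_succ (g : Y → Y) (n : Y → ℕ) (σ : Y → Y) (z : Y) (l : ℕ) :
    tau g n σ z (l + 1) = tau g n σ z l + n (σ (g^[tau g n σ z l] z)) := rfl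

lemma le_tau {g : Y → Y} {n : Y → ℕ} {σ : Y → Y} (hn : ∀ y, 0 < n y) (z : Y) :
    ∀ l, l ≤ tau g n σ z l := by
  intro l
  induction l with
  | zero => exact le_rfl
  | succ l ih =>
    rw [tau_succ]
    have := hn (σ (g^[tau g n σ z l] z))
    omega

/-- Existence of a small dynamical cover of a compact zero-entropy set. -/
lemma fiber_cover [UniformSpace X] [CompactSpace X] {f : X → X}
    (hf : Continuous f) {F : Set X} (hF : IsCompact F)
    (hent : coverEntropy f F ≤ 0) {V : Set (X × X)} (hV : V ∈ uniformity X)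
    {ε : ℝ} (hε : 0 < ε) :
    ∃ (n : ℕ) (s : Finset X), 0 < n ∧ IsDynCoverOf f F V n s ∧
      ((s.card : ℝ) ≤ Real.exp (ε * n)) := by
  have h1 : coverEntropyEntourage f F V ≤ 0 :=
    (coverEntropyEntourage_le_coverEntropy f F hV).trans hent
  have h2 : coverEntropyEntourage f F V < (ε : EReal) :=
    h1.trans_lt (by exact_mod_cast hε)
  have h3 : ∀ᶠ n : ℕ in atTop, ENNReal.log (coverMincard f F V n) / (n : EReal) < (ε : EReal) :=
    Filter.eventually_lt_of_limsup_lt h2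
  obtain ⟨n, hlt, hn⟩ := (h3.and (eventually_ge_atTop 1)).exists
  have hfin : coverMincard f F V n < ⊤ :=
    coverMincard_finite_of_isCompact_uniformContinuous hF
      (CompactSpace.uniformContinuous_of_continuous hf) hV n
  obtain ⟨s, s_cover, s_card⟩ := (coverMincard_finite_iff f F V n).1 hfin
  refine ⟨n, s, hn, s_cover, ?_⟩
  have hnpos : (0 : EReal) < (n : EReal) := by exact_mod_cast hn
  have hle : ENNReal.log (coverMincard f F V n) ≤ (n : EReal) * (ε : EReal) :=
    (EReal.div_le_iff_le_mul hnpos (EReal.natCast_ne_top n)).1 hlt.le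
  rw [← s_card] at hle
  have hcast : (((s.card : ℕ∞)) : ENNReal) = ((s.card : ℕ) : ENNReal) := by norm_cast
  rw [hcast] at hle
  have hre : ((n : EReal) * (ε : EReal)) = ((ε * n : ℝ) : EReal) := by
    rw [mul_comm]
    norm_cast
  rw [hre, ← Real.log_exp (ε * n), ← ENNReal.log_ofReal_of_pos (Real.exp_pos _)] at hle
  rw [ENNReal.log_le_log_iff] at hle
  have := (ENNReal.le_ofReal_iff_toReal_le (by simp) (Real.exp_pos _).le).1 hle
  simpa using this


lemma exists_block (g : Y → Y) {n : Y → ℕ} (σ : Y → Y) (hn : ∀ y, 0 < n y) (z : Y) (j : ℕ) :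
    ∃ l, tau g n σ z l ≤ j ∧ j < tau g n σ z (l + 1) := by
  classical
  refine ⟨Nat.findGreatest (fun l => tau g n σ z l ≤ j) j, ?_, ?_⟩
  · apply Nat.findGreatest_spec (P := fun l => tau g n σ z l ≤ j) (Nat.zero_le j)
    show tau g n σ z 0 ≤ j
    exact Nat.zero_le j
  rcases le_or_gt (Nat.findGreatest (fun l => tau g n σ z l ≤ j) j + 1) j with h | h
  · have h2 := Nat.findGreatest_is_greatest
      (lt_add_one (Nat.findGreatest (fun l => tau g n σ z l ≤ j) j)) h
    simp only [not_le] at h2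
    exact h2
  · exact lt_of_lt_of_le h (le_tau hn z _)

/-- The key combinatorial estimate: coding orbits of `f` by orbits of `g`. -/
lemma mincard_bound [UniformSpace X] [UniformSpace Y]
    {f : X → X} {g : Y → Y} {π : X → Y} (hsemi : Function.Semiconj π f g)
    {V : Set (X × X)} (V_symm : SetRel.IsSymm V)
    {n : Y → ℕ} {s : Y → Finset X} (hn : ∀ y, 0 < n y) (σ : Y → Y) {W : Set (Y × Y)} (W_symm : SetRel.IsSymm W)
    (hσ : ∀ y : Y, π ⁻¹' (ball y W) ⊆ ⋃ x ∈ s (σ y), ball x (dynEntourage f V (n (σ y))))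
    {B : ℕ} (hBpos : 0 < B) {m : ℕ}
    (hcard : ∀ z : Y, (∏ l : Fin m, (if tau g n σ z l < m then
      (s (σ (g^[tau g n σ z l] z))).card else 1)) ≤ B) :
    coverMincard f (univ : Set X) (V ○ V) m ≤ coverMincard g (univ : Set Y) W m * B := by
  classical
  rcases isEmpty_or_nonempty X with hX | hX
  · rw [univ_eq_empty_iff.2 hX, coverMincard_empty]
    exact zero_le
  obtain ⟨x₀⟩ := hX
  rcases eq_top_or_lt_top (coverMincard g (univ : Set Y) W m) with hd | hd
  · rw [hd, ENat.top_mul (by exact_mod_cast hBpos.ne')]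
    exact le_top
  obtain ⟨t, t_cover, t_card⟩ := (coverMincard_finite_iff g univ W m).1 hd
  set Code : Y → Finset (Fin m → X) := fun z =>
    Fintype.piFinset (fun l : Fin m => if tau g n σ z l < m then
      s (σ (g^[tau g n σ z l] z)) else {x₀}) with hCode
  set Cl : Y → (Fin m → X) → Set X := fun z c =>
    {x | ∀ l : Fin m, tau g n σ z (l : ℕ) < m →
      f^[tau g n σ z l] x ∈ ball (c l)
        (dynEntourage f V (n (σ (g^[tau g n σ z l] z))))} with hCl
  have hClmem : ∀ (z : Y) (c : Fin m → X) (x : X), x ∈ Cl z c ↔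
      ∀ l : Fin m, tau g n σ z (l : ℕ) < m →
      f^[tau g n σ z l] x ∈ ball (c l)
        (dynEntourage f V (n (σ (g^[tau g n σ z l] z)))) := fun z c x => Iff.rfl
  have hrepex : ∀ (z : Y) (c : Fin m → X), ∃ x' : X, (Cl z c).Nonempty → x' ∈ Cl z c := by
    intro z c
    by_cases h : (Cl z c).Nonempty
    · exact ⟨h.choose, fun _ => h.choose_spec⟩
    · exact ⟨x₀, fun h' => absurd h' h⟩
  choose rep hrep using hrepex
  set cov : Finset X := t.biUnion (fun z => (Code z).image (rep z)) with hcov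
  have cov_is : IsDynCoverOf f univ (V ○ V) m cov := by
    intro x _
    have hx : π x ∈ ⋃ z ∈ t, ball z (dynEntourage g W m) := by
      obtain ⟨z, hz, hxz⟩ := t_cover (mem_univ (π x))
      exact mem_iUnion₂.2 ⟨z, hz,
        mem_dynEntourage.2 fun k hk => (SetRel.comm W).1 (mem_dynEntourage.1 hxz k hk)⟩
    rw [mem_iUnion₂] at hx
    obtain ⟨z, hz, hxz⟩ := hx
    have korb : ∀ j < m, f^[j] x ∈
        ⋃ p ∈ s (σ (g^[j] z)), ball p (dynEntourage f V (n (σ (g^[j] z)))) := by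
      intro j hj
      apply hσ (g^[j] z)
      have h1 : π (f^[j] x) = g^[j] (π x) := (hsemi.iterate_right j) x
      have h2 : g^[j] (π x) ∈ ball (g^[j] z) W :=
        mem_ball_dynEntourage.1 hxz j hj
      rw [mem_preimage, h1]
      exact h2
    have hcode : ∀ l : Fin m, ∃ p : X,
        (tau g n σ z (l : ℕ) < m → p ∈ s (σ (g^[tau g n σ z (l : ℕ)] z)) ∧
          f^[tau g n σ z (l : ℕ)] x ∈ ball p
            (dynEntourage f V (n (σ (g^[tau g n σ z (l : ℕ)] z))))) ∧
        (¬ tau g n σ z (l : ℕ) < m → p = x₀) := by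
      intro l
      by_cases hl : tau g n σ z (l : ℕ) < m
      · have := korb (tau g n σ z (l : ℕ)) hl
        rw [mem_iUnion₂] at this
        obtain ⟨p, hp, hpx⟩ := this
        exact ⟨p, fun _ => ⟨hp, hpx⟩, fun h => absurd hl h⟩
      · exact ⟨x₀, fun h => absurd h hl, fun _ => rfl⟩
    choose c hc1 hc2 using hcode
    have hcCode : c ∈ Code z := by
      rw [hCode, Fintype.mem_piFinset]
      intro l
      by_cases hl : tau g n σ z (l : ℕ) < m
      · rw [if_pos hl]; exact ((hc1 l) hl).1
      · rw [if_neg hl, Finset.mem_singleton]; exact hc2 l hl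
    have hxCl : x ∈ Cl z c := fun l hl => ((hc1 l) hl).2
    have hrepCl : rep z c ∈ Cl z c := hrep z c ⟨x, hxCl⟩
    have hmem : (x, rep z c) ∈ dynEntourage f (V ○ V) m := by
      rw [mem_dynEntourage]
      intro j hj
      obtain ⟨l, hle, hlt⟩ := exists_block g σ hn z j
      have hlm : tau g n σ z l < m := lt_of_le_of_lt hle hj
      have hlm' : l < m := lt_of_le_of_lt (le_trans (le_tau hn z l) hle) hj
      have hr : j - tau g n σ z l < n (σ (g^[tau g n σ z l] z)) := by
        have := tau_succ g n σ z l
        omega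
      have h1 := mem_ball_dynEntourage.1 ((hClmem z c x).1 hxCl ⟨l, hlm'⟩ hlm)
        (j - tau g n σ z l) hr
      have h2 := mem_ball_dynEntourage.1 ((hClmem z c (rep z c)).1 hrepCl ⟨l, hlm'⟩ hlm)
        (j - tau g n σ z l) hr
      have e1 : f^[j - tau g n σ z l] (f^[tau g n σ z l] x) = f^[j] x := by
        rw [← Function.iterate_add_apply]
        congr 1
        omega
      have e2 : f^[j - tau g n σ z l] (f^[tau g n σ z l] (rep z c)) = f^[j] (rep z c) := by
        rw [← Function.iterate_add_apply]
        congr 1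
        omega
      rw [e1] at h1
      rw [e2] at h2
      exact SetRel.prodMk_mem_comp ((SetRel.comm V).1 h1) h2
    refine ⟨rep z c, ?_, hmem⟩
    rw [Finset.mem_coe, hcov, Finset.mem_biUnion]
    exact ⟨z, hz, Finset.mem_image_of_mem _ hcCode⟩
  have hcovcard : cov.card ≤ t.card * B := by
    apply Finset.card_biUnion_le.trans
    have hone : ∀ z ∈ t, ((Code z).image (rep z)).card ≤ B := by
      intro z _
      apply Finset.card_image_le.trans
      rw [hCode, Fintype.card_piFinset]
      have heq : ∀ l : Fin m, ((if tau g n σ z (l : ℕ) < m then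
          s (σ (g^[tau g n σ z (l : ℕ)] z)) else {x₀}) : Finset X).card =
          (if tau g n σ z (l : ℕ) < m then (s (σ (g^[tau g n σ z (l : ℕ)] z))).card else 1) := by
        intro l
        by_cases hl : tau g n σ z (l : ℕ) < m
        · rw [if_pos hl, if_pos hl]
        · rw [if_neg hl, if_neg hl, Finset.card_singleton]
      rw [Finset.prod_congr rfl (fun l _ => heq l)]
      exact hcard z
    calc (∑ z ∈ t, ((Code z).image (rep z)).card) ≤ ∑ _z ∈ t, B := Finset.sum_le_sum hone
      _ = t.card * B := by rw [Finset.sum_const, smul_eq_mul]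
  calc coverMincard f (univ : Set X) (V ○ V) m ≤ (cov.card : ℕ∞) :=
        cov_is.coverMincard_le_card
    _ ≤ ((t.card * B : ℕ) : ℕ∞) := by exact_mod_cast hcovcard
    _ = (t.card : ℕ∞) * (B : ℕ∞) := by push_cast; rfl
    _ = coverMincard g (univ : Set Y) W m * B := by rw [t_card]

lemma sum_blocks_le (g : Y → Y) {n : Y → ℕ} {σ : Y → Y}
    {N : ℕ} (hN : ∀ y, n (σ y) ≤ N) (m : ℕ) (z : Y) :
    ∀ k : ℕ, (∑ l ∈ Finset.range k,
        (if tau g n σ z l < m then n (σ (g^[tau g n σ z l] z)) else 0)) ≤ m + N ∧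
      (tau g n σ z k < m → (∑ l ∈ Finset.range k,
        (if tau g n σ z l < m then n (σ (g^[tau g n σ z l] z)) else 0)) = tau g n σ z k) := by
  intro k
  induction k with
  | zero => simp [tau]
  | succ k ih =>
    rw [Finset.sum_range_succ]
    by_cases hk : tau g n σ z k < m
    · rw [if_pos hk, (ih.2 hk), ← tau_succ]
      have h1 := hN (g^[tau g n σ z k] z)
      constructor
      · rw [tau_succ]; omega
      · intro _; rfl
    · rw [if_neg hk]
      have hmono : tau g n σ z k ≤ tau g n σ z (k+1) := by rw [tau_succ]; omega
      refine ⟨by simpa using ih.1, fun h => absurd (lt_of_le_of_lt hmono h) hk⟩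

lemma prod_bound {g : Y → Y} {n : Y → ℕ} {s : Y → Finset X} {σ : Y → Y}
    {N : ℕ} (hN : ∀ y, n (σ y) ≤ N)
    {ε : ℝ} (hε : 0 < ε)
    (hcard : ∀ y, ((s (σ y)).card : ℝ) ≤ Real.exp (ε * n (σ y))) (m : ℕ) (z : Y) :
    (∏ l : Fin m, (if tau g n σ z l < m then
      (s (σ (g^[tau g n σ z l] z))).card else 1)) ≤
      ⌈Real.exp (ε * ((m : ℝ) + (N : ℝ)))⌉₊ := by
  have key : ((∏ l : Fin m, (if tau g n σ z l < m then
      (s (σ (g^[tau g n σ z l] z))).card else 1) : ℕ) : ℝ) ≤ Real.exp (ε * (m + N)) := by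
    push_cast
    have hfac : ∀ l : Fin m, ((if tau g n σ z l < m then
        ((s (σ (g^[tau g n σ z l] z))).card : ℝ) else 1)) ≤
        Real.exp (ε * (if tau g n σ z l < m then n (σ (g^[tau g n σ z l] z)) else 0)) := by
      intro l
      by_cases hl : tau g n σ z (l : ℕ) < m
      · rw [if_pos hl, if_pos hl]; exact hcard _
      · rw [if_neg hl, if_neg hl]; simp
    calc (∏ l : Fin m, (if tau g n σ z l < m then
          ((s (σ (g^[tau g n σ z l] z))).card : ℝ) else 1))
        ≤ ∏ l : Fin m, Real.exp (ε * (if tau g n σ z l < m then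
            n (σ (g^[tau g n σ z l] z)) else 0)) := by
          apply Finset.prod_le_prod
          · intro l _
            by_cases hl : tau g n σ z (l : ℕ) < m
            · rw [if_pos hl]; positivity
            · rw [if_neg hl]; norm_num
          · exact fun l _ => hfac l
      _ = Real.exp (∑ l : Fin m, ε * (if tau g n σ z l < m then
            n (σ (g^[tau g n σ z l] z)) else 0)) := (Real.exp_sum _ _).symm
      _ ≤ Real.exp (ε * (m + N)) := by
          apply Real.exp_le_exp.2
          rw [← Finset.mul_sum]
          apply mul_le_mul_of_nonneg_left _ hε.le
          have hnat : (∑ i : Fin m, (if tau g n σ z (i : ℕ) < m then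
              n (σ (g^[tau g n σ z (i : ℕ)] z)) else 0)) ≤ m + N := by
            rw [Fin.sum_univ_eq_sum_range (fun l => (if tau g n σ z l < m then
              n (σ (g^[tau g n σ z l] z)) else 0))]
            exact (sum_blocks_le g hN m z m).1
          exact_mod_cast hnat
  have := key.trans (Nat.le_ceil _)
  exact_mod_cast this

/-- From the `coverMincard` bounds, deduce the entropy bound. -/
lemma entropy_limsup_bound [UniformSpace X] [UniformSpace Y]
    {f : X → X} {g : Y → Y} {V : Set (X × X)} {W : Set (Y × Y)} (hW : W ∈ uniformity Y)
    (hYne : (univ : Set Y).Nonempty)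
    {ε : ℝ} (hε : 0 < ε) (N : ℕ)
    (hm : ∀ m : ℕ, coverMincard f (univ : Set X) V m ≤
      coverMincard g (univ : Set Y) W m * ⌈Real.exp (ε * ((m : ℝ) + (N : ℝ)))⌉₊) :
    coverEntropyEntourage f (univ : Set X) V ≤ coverEntropy g (univ : Set Y) + (ε : EReal) := by
  set d : ℕ → ℕ∞ := fun m => coverMincard g (univ : Set Y) W m with hd
  set B : ℕ → ℕ := fun m => ⌈Real.exp (ε * ((m : ℝ) + (N : ℝ)))⌉₊ with hB
  have hd1 : ∀ m, 1 ≤ d m := fun m => (one_le_coverMincard_iff g univ W m).2 hYne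
  have hB1 : ∀ m, 1 ≤ B m := fun m => Nat.one_le_iff_ne_zero.2
    (Nat.ceil_pos.2 (Real.exp_pos _)).ne'
  -- the comparison sequence
  set r : ℕ → ℝ := fun m => (Real.log 2 + ε * N) / m + ε with hr
  have hrlim : Tendsto (fun m : ℕ => ((r m : ℝ) : EReal)) atTop (nhds (ε : EReal)) := by
    rw [EReal.tendsto_coe]
    have := (tendsto_const_div_atTop_nhds_zero_nat (Real.log 2 + ε * N)).add_const ε
    rwa [zero_add] at this
  -- pointwise bound for m ≥ 1
  have hpt : ∀ m : ℕ, 1 ≤ m →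
      ENNReal.log (coverMincard f (univ : Set X) V m) / (m : EReal) ≤
      ENNReal.log (d m) / (m : EReal) + ((r m : ℝ) : EReal) := by
    intro m hm1
    have hlog1 : ENNReal.log (coverMincard f (univ : Set X) V m) ≤
        ENNReal.log (d m) + ENNReal.log (B m) := by
      rw [← ENNReal.log_mul_add]
      apply ENNReal.log_monotone
      have hcast : ((d m * (B m : ℕ∞) : ℕ∞) : ENNReal) =
          ((d m : ℕ∞) : ENNReal) * ((B m : ℕ) : ENNReal) := by
        push_cast
        rfl
      calc ((coverMincard f (univ : Set X) V m : ℕ∞) : ENNReal)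
          ≤ ((d m * (B m : ℕ∞) : ℕ∞) : ENNReal) := by
            apply ENat.toENNReal_le.2
            exact hm m
        _ = ((d m : ℕ∞) : ENNReal) * ((B m : ℕ) : ENNReal) := hcast
    have hlogB : ENNReal.log (B m) ≤ ((Real.log 2 + ε * (m + N) : ℝ) : EReal) := by
      have h1 : ((B m : ℕ) : ENNReal) ≤ ENNReal.ofReal (2 * Real.exp (ε * ((m : ℝ) + (N : ℝ)))) := by
        rw [← ENNReal.ofReal_natCast]
        apply ENNReal.ofReal_le_ofReal
        have hexp1 : 1 ≤ Real.exp (ε * ((m : ℝ) + (N : ℝ))) := by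
          rw [Real.one_le_exp_iff]
          positivity
        calc ((B m : ℕ) : ℝ) ≤ Real.exp (ε * ((m : ℝ) + (N : ℝ))) + 1 := by
              exact (Nat.ceil_lt_add_one (by positivity)).le
          _ ≤ 2 * Real.exp (ε * ((m : ℝ) + (N : ℝ))) := by linarith
      calc ENNReal.log (B m) ≤ ENNReal.log (ENNReal.ofReal (2 * Real.exp (ε * ((m : ℝ) + (N : ℝ))))) :=
            ENNReal.log_monotone h1
        _ = ((Real.log 2 + ε * (m + N) : ℝ) : EReal) := by
            rw [ENNReal.log_ofReal_of_pos (by positivity)]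
            rw [Real.log_mul two_ne_zero (Real.exp_ne_zero _), Real.log_exp]
    have hdiv : ENNReal.log (coverMincard f (univ : Set X) V m) / (m : EReal) ≤
        (ENNReal.log (d m) + ENNReal.log (B m)) / (m : EReal) :=
      EReal.div_le_div_right_of_nonneg (by exact_mod_cast Nat.zero_le m) hlog1
    apply hdiv.trans
    rw [EReal.div_right_distrib_of_nonneg]
    · apply add_le_add_right
      have h2 : ENNReal.log (B m) / (m : EReal) ≤
          ((Real.log 2 + ε * (m + N) : ℝ) : EReal) / (m : EReal) :=
        EReal.div_le_div_right_of_nonneg (by exact_mod_cast Nat.zero_le m) hlogB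
      apply h2.trans
      have hmne : (m : ℝ) ≠ 0 := by positivity
      have : ((Real.log 2 + ε * (m + N) : ℝ) : EReal) / (m : EReal) = ((r m : ℝ) : EReal) := by
        rw [show ((m : ℕ) : EReal) = (((m : ℕ) : ℝ) : EReal) by norm_cast, ← EReal.coe_div]
        norm_cast
        rw [hr]
        field_simp
        push_cast
        ring
      rw [this]
    · rw [ENNReal.zero_le_log_iff]
      exact_mod_cast hd1 m
    · rw [ENNReal.zero_le_log_iff]
      exact_mod_cast hB1 m
  -- conclude via limsup
  have hlimsup : coverEntropyEntourage f (univ : Set X) V ≤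
      atTop.limsup ((fun m : ℕ => ENNReal.log (d m) / (m : EReal)) +
        (fun m : ℕ => ((r m : ℝ) : EReal))) := by
    have hev : (fun m : ℕ => ENNReal.log (coverMincard f (univ : Set X) V m) / (m : EReal))
        ≤ᶠ[atTop] ((fun m : ℕ => ENNReal.log (d m) / (m : EReal)) +
          (fun m : ℕ => ((r m : ℝ) : EReal))) := by
      filter_upwards [eventually_ge_atTop 1] with m hm1
      exact hpt m hm1
    exact Filter.limsup_le_limsup hev
  apply hlimsup.trans
  have hv : atTop.limsup (fun m : ℕ => ((r m : ℝ) : EReal)) = (ε : EReal) :=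
    hrlim.limsup_eq
  have hadd := EReal.limsup_add_le (f := atTop)
    (u := fun m : ℕ => ENNReal.log (d m) / (m : EReal))
    (v := fun m : ℕ => ((r m : ℝ) : EReal))
    (Or.inr (by rw [hv]; exact EReal.coe_ne_top ε))
    (Or.inr (by rw [hv]; exact EReal.coe_ne_bot ε))
  apply hadd.trans
  rw [hv]
  apply add_le_add_left
  exact coverEntropyEntourage_le_coverEntropy g univ hW

lemma EReal_le_of_forall_add {a b : EReal} (hb : b ≠ ⊥)
    (h : ∀ ε : ℝ, 0 < ε → a ≤ b + (ε : EReal)) : a ≤ b := by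
  rcases eq_top_or_lt_top b with rfl | hbt
  · exact le_top
  lift b to ℝ using ⟨hbt.ne, hb⟩
  rcases eq_bot_or_bot_lt a with rfl | hab
  · exact bot_le
  rcases eq_top_or_lt_top a with rfl | hat
  · exfalso
    have := h 1 one_pos
    rw [← EReal.coe_add] at this
    exact (this.trans_lt (EReal.coe_lt_top _)).ne rfl
  lift a to ℝ using ⟨hat.ne, hab.ne'⟩
  have : ∀ ε : ℝ, 0 < ε → a ≤ b + ε := by
    intro ε hε
    have := h ε hε
    rw [← EReal.coe_add] at this
    exact_mod_cast this
  exact_mod_cast le_of_forall_pos_le_add this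

/-- Bowen's inequality specialized to zero fiber entropy: the hard direction. -/
lemma hard [MetricSpace X] [CompactSpace X] [MetricSpace Y] [CompactSpace Y]
    {f : X → X} (hf : Continuous f) {g : Y → Y} {π : X → Y}
    (hπcont : Continuous π)
    (hsemi : Function.Semiconj π f g)
    (hfiber : ∀ y : Y, coverEntropy f (π ⁻¹' {y}) = 0) :
    coverEntropy f (univ : Set X) ≤ coverEntropy g (univ : Set Y) := by
  classical
  rcases isEmpty_or_nonempty X with hX | hX
  · rw [univ_eq_empty_iff.2 hX, coverEntropy_empty]
    exact bot_le
  have hYne : (univ : Set Y).Nonempty := ⟨π (Classical.arbitrary X), mem_univ _⟩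
  have hgbot : coverEntropy g (univ : Set Y) ≠ ⊥ :=
    fun h => absurd (h ▸ coverEntropy_nonneg g hYne) (by simp)
  apply EReal_le_of_forall_add hgbot
  intro ε hε
  refine iSup₂_le fun U hU => ?_
  obtain ⟨V, V_uni, V_open, V_symm, hVU⟩ := comp_open_symm_mem_uniformity_sets hU
  apply le_trans (coverEntropyEntourage_antitone f univ hVU)
  -- Step A: small dynamical covers of each fiber
  have hA : ∀ y : Y, ∃ (k : ℕ) (sy : Finset X), 0 < k ∧ IsDynCoverOf f (π ⁻¹' {y}) V k sy ∧
      ((sy.card : ℝ) ≤ Real.exp (ε * k)) := fun y =>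
    fiber_cover hf (IsClosed.isCompact (isClosed_singleton.preimage hπcont))
      (le_of_eq (hfiber y)) V_uni hε
  choose n s hn hs hcd using hA
  -- Step B: open neighborhoods of fibers
  set G : Y → Set X := fun y => ⋃ x ∈ (s y : Set X), ball x (dynEntourage f V (n y)) with hG
  have hGopen : ∀ y, IsOpen (G y) := by
    intro y
    apply isOpen_biUnion
    intro x _
    exact UniformSpace.isOpen_ball x (isOpen.dynEntourage hf V_open (n y))
  have hfibG : ∀ y, π ⁻¹' {y} ⊆ G y := fun y x hx => by
    obtain ⟨p, hp, hxp⟩ := hs y hx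
    exact mem_iUnion₂.2 ⟨p, hp,
      mem_dynEntourage.2 fun k hk => (SetRel.comm V).1 (mem_dynEntourage.1 hxp k hk)⟩
  set O : Y → Set Y := fun y => (π '' (G y)ᶜ)ᶜ with hO
  have hOopen : ∀ y, IsOpen (O y) :=
    fun y => (hπcont.isClosedMap _ (hGopen y).isClosed_compl).isOpen_compl
  have hyO : ∀ y, y ∈ O y := by
    intro y hy
    obtain ⟨x, hx, hxy⟩ := hy
    exact hx (hfibG y (by rw [mem_preimage, hxy]; exact rfl))
  have hOsub : ∀ y, π ⁻¹' (O y) ⊆ G y := by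
    intro y x hx
    by_contra h
    exact hx (mem_image_of_mem π h)
  -- Step C: finite subcover and Lebesgue entourage
  have hcover : (univ : Set Y) ⊆ ⋃ y, O y := fun y _ => mem_iUnion.2 ⟨y, hyO y⟩
  obtain ⟨t0, ht0⟩ := isCompact_univ.elim_finite_subcover O hOopen hcover
  have hcover' : (univ : Set Y) ⊆ ⋃ i : {y : Y // y ∈ t0}, O i.1 := by
    intro y hy
    obtain ⟨z, hz, hyz⟩ := mem_iUnion₂.1 (ht0 hy)
    exact mem_iUnion.2 ⟨⟨z, hz⟩, hyz⟩
  obtain ⟨W0, hW0, hWO0⟩ := lebesgue_number_lemma isCompact_univ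
    (fun i : {y : Y // y ∈ t0} => hOopen i.1) hcover'
  set W : Set (Y × Y) := SetRel.symmetrize W0 with hWdef
  have hW : W ∈ uniformity Y := symmetrize_mem_uniformity hW0
  have hWO : ∀ x ∈ (univ : Set Y), ∃ i : {y : Y // y ∈ t0}, ball x W ⊆ O i.1 := fun x hx =>
    let ⟨i, hi⟩ := hWO0 x hx
    ⟨i, (ball_mono SetRel.symmetrize_subset_self x).trans hi⟩
  have hWO' : ∀ x : Y, ∃ i : {y : Y // y ∈ t0}, ball x W ⊆ O i.1 :=
    fun x => hWO x (mem_univ x)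
  choose σ0 hσ0 using hWO'
  set σ : Y → Y := fun x => (σ0 x : Y) with hσdef
  set N : ℕ := t0.sup n with hNdef
  have hN : ∀ y, n (σ y) ≤ N := fun y => Finset.le_sup (σ0 y).2
  have hσ : ∀ y : Y, π ⁻¹' (ball y W) ⊆
      ⋃ x ∈ s (σ y), ball x (dynEntourage f V (n (σ y))) := by
    intro y
    refine Subset.trans (preimage_mono (hσ0 y)) ?_
    exact hOsub (σ y)
  -- Step D: the counting estimate and the entropy bound
  have hmm : ∀ m : ℕ, coverMincard f (univ : Set X) (V ○ V) m ≤
      coverMincard g (univ : Set Y) W m * ⌈Real.exp (ε * ((m : ℝ) + (N : ℝ)))⌉₊ := by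
    intro m
    apply mincard_bound hsemi V_symm hn σ SetRel.isSymm_symmetrize hσ (Nat.ceil_pos.2 (Real.exp_pos _))
    intro z
    exact prod_bound hN hε (fun y => hcd (σ y)) m z
  exact entropy_limsup_bound hW hYne hε N hmm

end BowenAux

open BowenAux in
/-- Ledrappier–Walters / Bowen: a semiconjugacy `π` between homeomorphisms of compact
metric spaces with zero topological (Bowen) entropy on every fiber preserves
topological entropy.  In particular, for a fiber-preserving homeomorphism of a circle
bundle covering a base homeomorphism, the entropies of the total and base maps agree. -/
theorem entropy_of_semiconj_zero_fiber_entropy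
    {X Y : Type*} [MetricSpace X] [CompactSpace X] [MetricSpace Y] [CompactSpace Y]
    (f : X ≃ₜ X) (g : Y ≃ₜ Y) (π : X → Y)
    (hπcont : Continuous π) (hπsurj : Function.Surjective π)
    (hsemi : π ∘ f = g ∘ π)
    (hfiber : ∀ y : Y, coverEntropy (⇑f) (π ⁻¹' {y}) = 0) :
    coverEntropy (⇑f) Set.univ = coverEntropy (⇑g) Set.univ := by
  have hsemj : Function.Semiconj π (⇑f) (⇑g) := fun x => congr_fun hsemi x
  refine le_antisymm (hard f.continuous hπcont hsemj hfiber) ?_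
  have h1 := coverEntropy_image_le_of_uniformContinuous (S := ⇑f) (T := ⇑g) hsemj
    (CompactSpace.uniformContinuous_of_continuous hπcont) Set.univ
  rwa [Set.image_univ, hπsurj.range_eq] at h1
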